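/- A ring R is semiperfect if and only if the left regular module R is supplemented. -/

import Mathlib

open Submodule Function

/-- A submodule `N` of `M` is PSD in `M` if whenever `N + X = M`, there is a
projective direct summand `S` of `M` with `S ≤ N` and `M = S ⊕ X`. -/
def IsPSD (R : Type*) [Ring R] {M : Type*} [AddCommGroup M] [Module R M]
    (N : Submodule R M) : Prop :=
  ∀ X : Submodule R M, N ⊔ X = ⊤ →
    ∃ S : Submodule R M, S ≤ N ∧ Module.Projective R ↥S ∧ IsCompl S X

/-- `N` is small in `M`: `N + L = M` implies `L = M`. -/
def IsSmallSub (R : Type*) [Ring R] {M : Type*} [AddCommGroup M] [Module R M]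
    (N : Submodule R M) : Prop :=
  ∀ L : Submodule R M, N ⊔ L = ⊤ → L = ⊤

/-- The (Jacobson) radical of a module: intersection of all maximal submodules. -/
def radM (R M : Type*) [Ring R] [AddCommGroup M] [Module R M] : Submodule R M :=
  sInf {m : Submodule R M | IsCoatom m}

/-- `M` is supplemented: every submodule `X` has a submodule `Y` with `X + Y = M`
and `X ∩ Y` small in `Y`. -/
def IsSupplemented (R M : Type*) [Ring R] [AddCommGroup M] [Module R M] : Prop :=
  ∀ X : Submodule R M, ∃ Y : Submodule R M, X ⊔ Y = ⊤ ∧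
    IsSmallSub R (Submodule.comap Y.subtype X)

/-- `M` is lifting: every submodule `N` admits a decomposition `M = A ⊕ B` with
`A ≤ N` and `N ∩ B` small in `B`. -/
def IsLifting (R M : Type*) [Ring R] [AddCommGroup M] [Module R M] : Prop :=
  ∀ N : Submodule R M, ∃ A B : Submodule R M, IsCompl A B ∧ A ≤ N ∧
    IsSmallSub R (Submodule.comap B.subtype N)

/-- `Y` is an `I`-supplement of `X` in `M`: `X + Y = M`, `X ∩ Y ⊆ IY`, and
`X ∩ Y` is PSD in `Y`. -/
def IsISupplementOf {R : Type*} [Ring R] {M : Type*} [AddCommGroup M] [Module R M]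
    (I : Ideal R) (Y X : Submodule R M) : Prop :=
  X ⊔ Y = ⊤ ∧ X ⊓ Y ≤ I • Y ∧ IsPSD R (Submodule.comap Y.subtype X)

/-- `M` is `I`-supplemented: every submodule has an `I`-supplement in `M`. -/
def IsISupplemented {R : Type*} [Ring R] (I : Ideal R) (M : Type*)
    [AddCommGroup M] [Module R M] : Prop :=
  ∀ X : Submodule R M, ∃ Y : Submodule R M, IsISupplementOf I Y X

/-- `R` is semiperfect: `R/J(R)` is semisimple and idempotents lift modulo `J(R)`. -/
def IsSemiperfectRing (R : Type*) [Ring R] : Prop :=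
  IsSemisimpleModule R (R ⧸ Ideal.jacobson (⊥ : Ideal R)) ∧
    ∀ r : R, r * r - r ∈ Ideal.jacobson (⊥ : Ideal R) →
      ∃ e : R, IsIdempotentElem e ∧ e - r ∈ Ideal.jacobson (⊥ : Ideal R)


section SmallLemmas
variable {R : Type*} [Ring R] {M N : Type*} [AddCommGroup M] [Module R M]
  [AddCommGroup N] [Module R N]

theorem ssmall_mono {S S' : Submodule R M} (h : S' ≤ S) (hS : IsSmallSub R S) :
    IsSmallSub R S' := fun L hL =>
  hS L (top_unique (hL ▸ sup_le_sup_right h L))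

theorem ssmall_sup {S T : Submodule R M} (hS : IsSmallSub R S) (hT : IsSmallSub R T) :
    IsSmallSub R (S ⊔ T) := fun L hL =>
  hT L (hS (T ⊔ L) (by rwa [← sup_assoc]))

theorem ssmall_map (f : M →ₗ[R] N) {S : Submodule R M} (hS : IsSmallSub R S) :
    IsSmallSub R (S.map f) := by
  intro L hL
  have h1 : S ⊔ L.comap f = ⊤ := by
    rw [eq_top_iff]
    rintro x -
    have hx : f x ∈ S.map f ⊔ L := hL ▸ mem_top
    obtain ⟨s, hs, l, hl, hsl⟩ := mem_sup.mp hx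
    obtain ⟨s₀, hs₀, rfl⟩ := hs
    have hx2 : x - s₀ ∈ L.comap f := by
      simp only [mem_comap, map_sub]
      rw [show f x = f s₀ + l from hsl.symm]
      simpa using hl
    simpa using add_mem_sup hs₀ hx2
  have h2 := hS _ h1
  rw [eq_top_iff]
  calc (⊤ : Submodule R N) = S.map f ⊔ L := hL.symm
    _ ≤ L := sup_le (fun y hy => by
        obtain ⟨x, _, rfl⟩ := hy
        have : x ∈ L.comap f := h2 ▸ mem_top
        exact this) le_rfl

theorem ssmall_le_jacobson {I : Ideal R} (h : IsSmallSub R I) :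
    I ≤ Ideal.jacobson (⊥ : Ideal R) := by
  refine le_sInf fun m hm => ?_
  obtain ⟨-, hmax⟩ := hm
  by_contra hnle
  have hlt : m < m ⊔ I := left_lt_sup.mpr hnle
  have htop : m ⊔ I = ⊤ := (Ideal.isMaximal_def.mp hmax).2 _ hlt
  have : m = ⊤ := h m (by rwa [sup_comm])
  exact (Ideal.isMaximal_def.mp hmax).1 this

theorem jacobson_ssmall : IsSmallSub R (Ideal.jacobson (⊥ : Ideal R)) := by
  intro L hL
  by_contra hne
  obtain ⟨m, hmax, hLm⟩ := Ideal.exists_le_maximal L hne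
  have hJ : Ideal.jacobson (⊥ : Ideal R) ≤ m := sInf_le ⟨bot_le, hmax⟩
  exact hmax.ne_top (top_le_iff.mp (hL ▸ sup_le hJ hLm))

end SmallLemmas

section LemA
variable {R : Type*} [Ring R]

theorem inf_eq_bot_of_ssmall {X Y : Submodule R R} (hsup : X ⊔ Y = ⊤)
    (hX : IsSmallSub R ((X ⊓ Y).comap X.subtype))
    (hY : IsSmallSub R ((X ⊓ Y).comap Y.subtype)) : X ⊓ Y = ⊥ := by
  obtain ⟨x, hx, y, hy, hxy⟩ := mem_sup.mp (show (1:R) ∈ X ⊔ Y from hsup ▸ mem_top)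
  set ρ : ↥X × ↥Y →ₗ[R] R := X.subtype.coprod Y.subtype with hρ
  set σ : R →ₗ[R] ↥X × ↥Y :=
    (LinearMap.toSpanSingleton R ↥X ⟨x, hx⟩).prod (LinearMap.toSpanSingleton R ↥Y ⟨y, hy⟩)
    with hσ
  have hρσ : ∀ r : R, ρ (σ r) = r := fun r => by
    simp only [hρ, hσ, LinearMap.coprod_apply, LinearMap.prod_apply, Function.prod,
      coe_subtype, LinearMap.toSpanSingleton_apply, SetLike.mk_smul_mk,
      smul_eq_mul, ← mul_add, hxy, mul_one]
  have hker : LinearMap.ker ρ ≤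
      (((X ⊓ Y).comap X.subtype).prod ((X ⊓ Y).comap Y.subtype)) := by
    rintro ⟨u, v⟩ huv
    have h0 : (u : R) + (v : R) = 0 := huv
    have hu : (u : R) ∈ X ⊓ Y :=
      ⟨u.2, by rw [show (u : R) = -(v : R) from eq_neg_of_add_eq_zero_left h0]
               exact Y.neg_mem v.2⟩
    have hv : (v : R) ∈ X ⊓ Y :=
      ⟨by rw [show (v : R) = -(u : R) from eq_neg_of_add_eq_zero_right h0]
          exact X.neg_mem u.2, v.2⟩
    exact ⟨hu, hv⟩
  have hprod : (((X ⊓ Y).comap X.subtype).prod ((X ⊓ Y).comap Y.subtype)) ≤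
      (((X ⊓ Y).comap X.subtype).map (LinearMap.inl R ↥X ↥Y)) ⊔
      (((X ⊓ Y).comap Y.subtype).map (LinearMap.inr R ↥X ↥Y)) := by
    rintro ⟨a, b⟩ ⟨ha, hb⟩
    exact mem_sup.mpr ⟨(a, 0), ⟨a, ha, rfl⟩, (0, b), ⟨b, hb, rfl⟩, by simp⟩
  have hkersmall : IsSmallSub R (LinearMap.ker ρ) :=
    ssmall_mono (le_trans hker hprod)
      (ssmall_sup (ssmall_map _ hX) (ssmall_map _ hY))
  have hranker : LinearMap.ker ρ ⊔ LinearMap.range σ = ⊤ := by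
    rw [eq_top_iff]
    rintro p -
    have h1 : p - σ (ρ p) ∈ LinearMap.ker ρ := by
      rw [LinearMap.mem_ker, map_sub, hρσ, sub_self]
    have := add_mem_sup h1 (LinearMap.mem_range_self σ (ρ p))
    simpa using this
  have hrtop : LinearMap.range σ = ⊤ := hkersmall _ hranker
  have hkerbot : LinearMap.ker ρ = ⊥ := by
    rw [eq_bot_iff]
    intro p hp
    obtain ⟨r, rfl⟩ : ∃ r, σ r = p := by
      have : p ∈ LinearMap.range σ := hrtop ▸ mem_top
      exact this
    have : r = 0 := by rw [← hρσ r]; exact hp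
    simp [this]
  rw [eq_bot_iff]
  intro z hz
  have hmem : ((⟨z, hz.1⟩, ⟨-z, Y.neg_mem hz.2⟩) : ↥X × ↥Y) ∈ LinearMap.ker ρ := by
    simp [hρ]
  rw [hkerbot, mem_bot] at hmem
  have := congrArg (fun p => ((Prod.fst p : ↥X) : R)) hmem
  simpa using this

end LemA


section Lift
variable {R : Type*} [Ring R]

theorem lift_idem_of_supp (hs : IsSupplemented R R) {r : R}
    (hr : r * r - r ∈ Ideal.jacobson (⊥ : Ideal R)) :
    ∃ e : R, e * e = e ∧ e - r ∈ Ideal.jacobson (⊥ : Ideal R) := by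
  set J := Ideal.jacobson (⊥ : Ideal R) with hJ
  obtain ⟨Y₀, hY₀sup, hY₀small⟩ := hs (span R {r})
  set f : R →ₗ[R] R := LinearMap.toSpanSingleton R R (1 - r) with hf
  set Y : Submodule R R := Y₀.map f with hYdef
  have hfY : ∀ x ∈ Y₀, f x ∈ Y := fun x hx => mem_map_of_mem hx
  set φ : ↥Y₀ →ₗ[R] ↥Y := f.restrict hfY with hφ
  -- Y is a supplement of span {r}
  have hYsup : span R {r} ⊔ Y = ⊤ := by
    rw [eq_top_iff]
    rintro m -
    obtain ⟨p, hp, q, hq, hpq⟩ := mem_sup.mp (show m ∈ span R {r} ⊔ Y₀ from hY₀sup ▸ mem_top)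
    have h1 : p + q * r ∈ span R {r} := add_mem hp (smul_mem _ q (mem_span_singleton_self r))
    have h2 : q * (1 - r) ∈ Y := hfY q hq
    refine mem_sup.mpr ⟨p + q * r, h1, q * (1 - r), h2, ?_⟩
    rw [← hpq, add_assoc, ← mul_add]; simp
  have hYsmall : IsSmallSub R ((span R {r}).comap Y.subtype) := by
    have hle : (span R {r}).comap Y.subtype ≤ ((span R {r}).comap Y₀.subtype).map φ := by
      rintro ⟨z, hzY⟩ hz
      obtain ⟨u, huY₀, hu2⟩ := mem_map.mp hzY
      have hu2' : u * (1 - r) = z := by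
        simpa [hf, smul_eq_mul] using hu2
      have hur : u ∈ span R {r} := by
        have : u = u * r + z := by rw [← hu2', ← mul_add]; simp
        rw [this]
        exact add_mem (smul_mem _ u (mem_span_singleton_self r)) hz
      exact ⟨⟨u, huY₀⟩, hur, Subtype.ext (by simpa [hφ, hf, smul_eq_mul] using hu2')⟩
    exact ssmall_mono hle (ssmall_map φ hY₀small)
  obtain ⟨x, hx, y, hy, hxy⟩ := mem_sup.mp (show (1:R) ∈ span R {r} ⊔ Y from hYsup ▸ mem_top)
  -- second supplement
  obtain ⟨X₀, hX₀sup, hX₀small⟩ := hs Y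
  set g : R →ₗ[R] R := LinearMap.toSpanSingleton R R x with hg
  set X₁ : Submodule R R := X₀.map g with hX₁def
  have hgX : ∀ u ∈ X₀, g u ∈ X₁ := fun u hu => mem_map_of_mem hu
  set ψ : ↥X₀ →ₗ[R] ↥X₁ := g.restrict hgX with hψ
  have hX₁r : X₁ ≤ span R {r} := by
    rintro z ⟨u, hu, rfl⟩
    exact smul_mem _ u hx
  have hX₁sup : X₁ ⊔ Y = ⊤ := by
    rw [eq_top_iff]
    rintro m -
    obtain ⟨v, hv, u, hu, hvu⟩ := mem_sup.mp (show m ∈ Y ⊔ X₀ from hX₀sup ▸ mem_top)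
    have h1 : v + u * y ∈ Y := add_mem hv (smul_mem _ u hy)
    have h2 : u * x ∈ X₁ := hgX u hu
    refine mem_sup.mpr ⟨u * x, h2, v + u * y, h1, ?_⟩
    rw [← hvu, show u * x + (v + u * y) = v + u * (x + y) from by noncomm_ring, hxy, mul_one]
  have hD_Y : IsSmallSub R ((X₁ ⊓ Y).comap Y.subtype) :=
    ssmall_mono (comap_mono (le_trans inf_le_left hX₁r)) hYsmall
  have hD_X : IsSmallSub R ((X₁ ⊓ Y).comap X₁.subtype) := by
    have hle : (X₁ ⊓ Y).comap X₁.subtype ≤ (Y.comap X₀.subtype).map ψ := by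
      rintro ⟨z, hzX₁⟩ hz
      obtain ⟨u, huX₀, hu2⟩ := mem_map.mp hzX₁
      have hu2' : u * x = z := by simpa [hg, smul_eq_mul] using hu2
      have huY : u ∈ Y := by
        have : u = u * y + z := by rw [← hu2', ← mul_add, add_comm y x, hxy, mul_one]
        rw [this]
        exact add_mem (smul_mem _ u hy) hz.2
      exact ⟨⟨u, huX₀⟩, huY, Subtype.ext (by simpa [hψ, hg, smul_eq_mul] using hu2')⟩
    exact ssmall_mono hle (ssmall_map ψ hX₀small)
  have hbot : X₁ ⊓ Y = ⊥ := inf_eq_bot_of_ssmall hX₁sup hD_X hD_Y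
  obtain ⟨e, he, w, hw, hew⟩ := mem_sup.mp (show (1:R) ∈ X₁ ⊔ Y from hX₁sup ▸ mem_top)
  refine ⟨e, ?_, ?_⟩
  · -- idempotent
    have h1 : e * e - e ∈ X₁ := sub_mem (smul_mem _ e he) he
    have h2 : e * e - e ∈ Y := by
      have hwe : w = 1 - e := by rw [← hew]; noncomm_ring
      have : e * e - e = -(e * w) := by rw [hwe]; noncomm_ring
      rw [this]
      exact Y.neg_mem (smul_mem _ e hw)
    have hmem : e * e - e ∈ X₁ ⊓ Y := ⟨h1, h2⟩
    rw [hbot, mem_bot] at hmem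
    exact sub_eq_zero.mp hmem
  · -- e - r ∈ J
    obtain ⟨a, ha⟩ := mem_span_singleton.mp (hX₁r he)
    rw [smul_eq_mul] at ha
    obtain ⟨q, hq, hq2⟩ := mem_map.mp hw
    have hq2' : q * (1 - r) = w := by simpa [hf, smul_eq_mul] using hq2
    have key : r - e = (e * r - e) + w * r := by
      have hsum : e * r + w * r = r := by rw [← add_mul, hew, one_mul]
      rw [sub_add_eq_add_sub, hsum]
    have m1 : e * r - e ∈ J := by
      have : e * r - e = a * (r * r - r) := by rw [← ha]; noncomm_ring
      rw [this]
      exact J.smul_mem a hr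
    have m2 : w * r ∈ J := by
      have : w * r = -(q * (r * r - r)) := by rw [← hq2']; noncomm_ring
      rw [this]
      exact J.neg_mem (J.smul_mem q hr)
    have : r - e ∈ J := key ▸ add_mem m1 m2
    simpa using J.neg_mem this

end Lift


section Semi
variable {R : Type*} [Ring R]

theorem inf_le_jacobson_of_suppsmall {X Y : Submodule R R}
    (hsmall : IsSmallSub R (X.comap Y.subtype)) :
    X ⊓ Y ≤ Ideal.jacobson (⊥ : Ideal R) := by
  have h1 := ssmall_map Y.subtype hsmall
  rw [Submodule.map_comap_subtype] at h1
  have := ssmall_le_jacobson h1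
  rwa [inf_comm] at this

theorem semisimple_of_supp (hs : IsSupplemented R R) :
    IsSemisimpleModule R (R ⧸ Ideal.jacobson (⊥ : Ideal R)) := by
  set J := Ideal.jacobson (⊥ : Ideal R) with hJdef
  refine { exists_isCompl := ?_ }
  intro W
  obtain ⟨Y, hsup, hsmall⟩ := hs (W.comap J.mkQ)
  have hXY : (W.comap J.mkQ) ⊓ Y ≤ J := inf_le_jacobson_of_suppsmall hsmall
  refine ⟨Y.map J.mkQ, ?_, ?_⟩
  · rw [disjoint_iff, eq_bot_iff]
    rintro z ⟨hzW, hzY⟩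
    obtain ⟨b, hb, rfl⟩ := hzY
    have hbJ : b ∈ J := hXY ⟨hzW, hb⟩
    rw [mem_bot, Submodule.mkQ_apply, Submodule.Quotient.mk_eq_zero]
    exact hbJ
  · rw [codisjoint_iff]
    have h1 : (W.comap J.mkQ).map J.mkQ = W := by
      rw [Submodule.map_comap_eq, Submodule.range_mkQ, top_inf_eq]
    rw [← h1, ← Submodule.map_sup, hsup, Submodule.map_top, Submodule.range_mkQ]

theorem supp_of_semiperfect
    (hss : IsSemisimpleModule R (R ⧸ Ideal.jacobson (⊥ : Ideal R)))
    (hlift : ∀ r : R, r * r - r ∈ Ideal.jacobson (⊥ : Ideal R) →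
      ∃ e : R, IsIdempotentElem e ∧ e - r ∈ Ideal.jacobson (⊥ : Ideal R)) :
    IsSupplemented R R := by
  set J := Ideal.jacobson (⊥ : Ideal R) with hJdef
  intro X
  obtain ⟨C, hC⟩ := hss.exists_isCompl (X.map J.mkQ)
  have hdisj : X.map J.mkQ ⊓ C = ⊥ := disjoint_iff.mp hC.disjoint
  have hcod : X.map J.mkQ ⊔ C = ⊤ := codisjoint_iff.mp hC.codisjoint
  obtain ⟨w, hw, c, hc, hwc⟩ :=
    mem_sup.mp (show J.mkQ 1 ∈ X.map J.mkQ ⊔ C from hcod ▸ mem_top)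
  obtain ⟨g, hg⟩ := J.mkQ_surjective c
  have hCgen : ∀ z ∈ C, ∃ u : R, u • c = z := by
    intro z hz
    obtain ⟨u, hu⟩ := J.mkQ_surjective z
    refine ⟨u, ?_⟩
    have h1 : u • J.mkQ 1 = z := by rw [← map_smul, smul_eq_mul, mul_one, hu]
    have h2 : z - u • c = u • w := by rw [← h1, ← hwc, smul_add]; abel
    have h3 : z - u • c ∈ X.map J.mkQ ⊓ C :=
      ⟨h2 ▸ Submodule.smul_mem _ u hw, sub_mem hz (C.smul_mem u hc)⟩
    rw [hdisj, mem_bot] at h3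
    exact (sub_eq_zero.mp h3).symm
  have hgg : g * g - g ∈ J := by
    have hq1 : J.mkQ (g * g - g) ∈ C := by
      have : J.mkQ (g * g - g) = g • c - c := by
        rw [map_sub, ← hg, ← map_smul, smul_eq_mul]
      rw [this]
      exact sub_mem (C.smul_mem g hc) hc
    have h5 : J.mkQ (1 - g) = w := by
      rw [map_sub, hg, ← hwc]; abel
    have hq2 : J.mkQ (g * g - g) ∈ X.map J.mkQ := by
      have : J.mkQ (g * g - g) = -(g • w) := by
        rw [← h5, ← map_smul, ← map_neg]
        congr 1
        rw [smul_eq_mul]; noncomm_ring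
      rw [this]
      exact neg_mem (Submodule.smul_mem _ g hw)
    have hm : J.mkQ (g * g - g) ∈ X.map J.mkQ ⊓ C := ⟨hq2, hq1⟩
    rw [hdisj, mem_bot, Submodule.mkQ_apply, Submodule.Quotient.mk_eq_zero] at hm
    exact hm
  obtain ⟨e, heeI, heg⟩ := hlift g hgg
  have hee : e * e = e := heeI
  have hce : J.mkQ e = c := by
    have : J.mkQ e = J.mkQ g := by
      rw [Submodule.mkQ_apply, Submodule.mkQ_apply]
      exact (Submodule.Quotient.eq J).mpr heg
    rw [this, hg]
  refine ⟨span R {e}, ?_, ?_⟩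
  · -- supplement sup condition
    apply jacobson_ssmall
    rw [eq_top_iff]
    rintro m -
    obtain ⟨w', hw', z, hz, hwz⟩ :=
      mem_sup.mp (show J.mkQ m ∈ X.map J.mkQ ⊔ C from hcod ▸ mem_top)
    obtain ⟨a, ha, haw⟩ := mem_map.mp hw'
    obtain ⟨u, huz⟩ := hCgen z hz
    have h6 : J.mkQ (u * e) = z := by
      rw [show u * e = u • e from rfl, map_smul, hce, huz]
    have hker : m - a - u * e ∈ J := by
      rw [← Submodule.Quotient.mk_eq_zero J, ← Submodule.mkQ_apply]
      rw [map_sub, map_sub, h6, haw, ← hwz]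
      abel
    refine mem_sup.mpr ⟨m - a - u * e, hker, a + u * e,
      add_mem_sup ha (smul_mem _ u (mem_span_singleton_self e)), by abel⟩
  · -- smallness
    set Y : Submodule R R := span R {e} with hYdef
    have hXY : X ⊓ Y ≤ J := by
      rintro z ⟨hzX, hzY⟩
      obtain ⟨b, hb⟩ := mem_span_singleton.mp hzY
      have h7 : J.mkQ z ∈ X.map J.mkQ := mem_map_of_mem hzX
      have h8 : J.mkQ z ∈ C := by
        rw [← hb, map_smul, hce]
        exact C.smul_mem b hc
      have hm : J.mkQ z ∈ X.map J.mkQ ⊓ C := ⟨h7, h8⟩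
      rw [hdisj, mem_bot, Submodule.mkQ_apply, Submodule.Quotient.mk_eq_zero] at hm
      exact hm
    intro L hL
    set L' := L.map Y.subtype with hL'def
    have hL'Y : L' ≤ Y := Submodule.map_subtype_le Y L
    have hstep1 : (Y ⊓ X) ⊔ L' = Y := by
      have h9 := congrArg (Submodule.map Y.subtype) hL
      rwa [Submodule.map_sup, Submodule.map_comap_subtype, Submodule.map_top,
        Submodule.range_subtype] at h9
    have hstep2 : L' ⊔ span R {1 - e} = ⊤ := by
      apply jacobson_ssmall
      rw [eq_top_iff]
      rintro m -
      have hme : m * e ∈ Y := smul_mem _ m (mem_span_singleton_self e)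
      rw [← hstep1] at hme
      obtain ⟨d, hd, l, hl, hdl⟩ := mem_sup.mp hme
      have hdJ : d ∈ J := hXY ⟨hd.2, hd.1⟩
      refine mem_sup.mpr ⟨d, hdJ, l + m * (1 - e),
        add_mem_sup hl (smul_mem _ m (mem_span_singleton_self (1 - e))), ?_⟩
      rw [← add_assoc, hdl, ← mul_add]
      simp
    have hYL : Y ≤ L' := by
      intro z hz
      obtain ⟨b, hb⟩ := mem_span_singleton.mp hz
      have hze : z * e = z := by rw [← hb, smul_eq_mul, mul_assoc, hee]
      obtain ⟨l, hl, d, hd, hld⟩ :=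
        mem_sup.mp (show z ∈ L' ⊔ span R {1 - e} from hstep2 ▸ mem_top)
      obtain ⟨b', hb'⟩ := mem_span_singleton.mp (hL'Y hl)
      have hle : l * e = l := by rw [← hb', smul_eq_mul, mul_assoc, hee]
      obtain ⟨v, hv⟩ := mem_span_singleton.mp hd
      have hde : d * e = 0 := by
        rw [← hv, smul_eq_mul, mul_assoc, sub_mul, one_mul, hee, sub_self, mul_zero]
      have hzl : z = l := by
        calc z = z * e := hze.symm
          _ = (l + d) * e := by rw [hld]
          _ = l := by rw [add_mul, hle, hde, add_zero]
      rw [hzl]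
      exact hl
    rw [eq_top_iff]
    rintro ⟨z, hz⟩ -
    obtain ⟨p, hpL, hpz⟩ := hYL hz
    have hp : p = (⟨z, hz⟩ : ↥Y) := Subtype.ext hpz
    rw [hp] at hpL
    exact hpL

end Semi


theorem stmt18 {R : Type*} [Ring R] :
    IsSemiperfectRing R ↔ IsSupplemented R R := by
  constructor
  · intro h
    exact supp_of_semiperfect h.1 h.2
  · intro h
    refine ⟨semisimple_of_supp h, fun r hr => ?_⟩
    obtain ⟨e, h1, h2⟩ := lift_idem_of_supp h hr
    exact ⟨e, h1, h2⟩
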